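/- arXiv:1905.11838 — 2 statements merged into one kernel-verified Lean document; each statement's English description precedes it below -/
import Mathlib

section
/- Let U = {z_1,…,z_n} be a universe, let S_1,…,S_t be nonempty subsets of U, and let k be a positive integer with k ≤ n. Fix the candidate set C = {x_1,…,x_t, y}. Let G_1,…,G_n be profiles over C such that for each i ∈ [n] and j ∈ [t]: D_{G_i}(y, x_j) = 2 if z_i ∈ S_j and D_{G_i}(y, x_j) = 0 otherwise, and D_{G_i}(x_j, x_ℓ) = 0 for all distinct j, ℓ ∈ [t] (such profiles exist). Then the Optimal Attack instance (C, {G_1,…,G_n}, k_a = n, k_d = k) for the Condorcet voting rule is a Yes instance if and only if there is NO subset W ⊆ U with |W| = k and W ∩ S_j ≠ ∅ for every j ∈ [t]. -/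
open Finset

/-- A vote over a candidate set `C` with `m` candidates: a ranking assigning each
candidate its position. -/
abbrev Vote (C : Type*) (m : ℕ) := C ≃ Fin m

/-- The score of candidate `x` in profile `P` under score vector `α`. -/
def score {C : Type*} {m : ℕ} (α : Fin m → ℝ) (P : Multiset (Vote C m)) (x : C) : ℝ :=
  (P.map fun v => α (v x)).sum

/-- The scoring rule of `α`: the set of candidates with maximum score. -/
def scoringRule {C : Type*} {m : ℕ} (α : Fin m → ℝ) (P : Multiset (Vote C m)) : Set C :=
  {x | ∀ y, score α P y ≤ score α P x}

/-- `margin P x y`: number of votes preferring `x` to `y` minus those preferring `y` to `x`. -/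
def margin {C : Type*} {m : ℕ} (P : Multiset (Vote C m)) (x y : C) : ℤ :=
  ((P.filter fun v => v x < v y).card : ℤ) - ((P.filter fun v => v y < v x).card : ℤ)

/-- `c` is the Condorcet winner of `P`. -/
def CondorcetWinner {C : Type*} {m : ℕ} (P : Multiset (Vote C m)) (c : C) : Prop :=
  ∀ y, y ≠ c → 0 < margin P c y

/-- The Condorcet voting rule: `{c}` if a Condorcet winner `c` exists, all candidates otherwise. -/
def condorcetRule {C : Type*} {m : ℕ} (P : Multiset (Vote C m)) : Set C :=
  {x | CondorcetWinner P x ∨ ¬ ∃ c, CondorcetWinner P c}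

/-- `α` is monotone nonincreasing (part of being a score vector). -/
def IsMonotoneScore {m : ℕ} (α : Fin m → ℝ) : Prop :=
  ∀ i j : Fin m, i ≤ j → α j ≤ α i

/-- `α` is normalized: some consecutive difference is `1` and all later entries are `0`. -/
def IsNormalized {m : ℕ} (α : Fin m → ℝ) : Prop :=
  ∃ j : ℕ, ∃ hj : j + 1 < m, α ⟨j, Nat.lt_of_succ_lt hj⟩ - α ⟨j + 1, hj⟩ = 1 ∧
    ∀ ℓ : Fin m, j < (ℓ : ℕ) → α ℓ = 0

/-- `Q` is a profile `P_u^v`: it has `m` votes and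
`s_Q(u) + 1 = s_Q(v) - 1 = s_Q(z)` for every `z ∉ {u, v}`. -/
def PfGood {C : Type*} {m : ℕ} (α : Fin m → ℝ) (Q : Multiset (Vote C m)) (u v : C) : Prop :=
  Multiset.card Q = m ∧ score α Q u + 1 = score α Q v - 1 ∧
    ∀ z : C, z ≠ u → z ≠ v → score α Q z = score α Q v - 1

/-- The Optimal Defense instance with groups `G`, attacker resource `ka` and defender
resource `kd` is a Yes instance for voting rule `r`. -/
def DefenseYes {C : Type*} {m N : ℕ} (r : Multiset (Vote C m) → Set C)
    (G : Fin N → Multiset (Vote C m)) (ka kd : ℕ) : Prop :=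
  ∃ I : Finset (Fin N), I.card ≤ kd ∧
    ∀ I' : Finset (Fin N), Disjoint I I' → I'.card ≤ ka →
      r (∑ i ∈ Finset.univ \ I', G i) = r (∑ i, G i)

/-- The Optimal Attack instance with groups `G`, attacker resource `ka` and defender
resource `kd` is a Yes instance for voting rule `r`. -/
def AttackYes {C : Type*} {m N : ℕ} (r : Multiset (Vote C m) → Set C)
    (G : Fin N → Multiset (Vote C m)) (ka kd : ℕ) : Prop :=
  ∃ I : Finset (Fin N), I.card ≤ ka ∧
    ∀ I' : Finset (Fin N), I'.card ≤ kd →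
      r (∑ i ∈ Finset.univ \ (I \ I'), G i) ≠ r (∑ i, G i)

open Finset

lemma margin_add' {C : Type*} {m : ℕ} (P Q : Multiset (Vote C m)) (a b : C) :
    margin (P + Q) a b = margin P a b + margin Q a b := by
  simp [margin, Multiset.filter_add]; ring

lemma margin_zero' {C : Type*} {m : ℕ} (a b : C) :
    margin (0 : Multiset (Vote C m)) a b = 0 := by simp [margin]

lemma margin_sum' {C : Type*} {m : ℕ} {ι : Type*} (s : Finset ι)
    (G : ι → Multiset (Vote C m)) (a b : C) :
    margin (∑ i ∈ s, G i) a b = ∑ i ∈ s, margin (G i) a b := by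
  classical
  induction s using Finset.induction_on with
  | empty => simp [margin_zero']
  | @insert i s h ih => simp [Finset.sum_insert h, margin_add', ih]

lemma margin_neg' {C : Type*} {m : ℕ} (P : Multiset (Vote C m)) (a b : C) :
    margin P a b = - margin P b a := by unfold margin; ring

/-- the Hitting Set reduction instance for Optimal Attack under the
Condorcet voting rule. -/
theorem stmt9 (n t : ℕ) (S : Fin t → Finset (Fin n)) (hS : ∀ j, (S j).Nonempty)
    (k : ℕ) (hk : 0 < k) (hkn : k ≤ n)
    {C : Type} [Fintype C] [DecidableEq C] (hC : Fintype.card C = t + 1)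
    (x : Fin t → C) (hxinj : Function.Injective x) (y : C) (hxy : ∀ j, x j ≠ y)
    (G : Fin n → Multiset (Vote C (t + 1)))
    (hGyx : ∀ i j, margin (G i) y (x j) = if i ∈ S j then 2 else 0)
    (hGxx : ∀ i j l, j ≠ l → margin (G i) (x j) (x l) = 0) :
    AttackYes condorcetRule G n k ↔
    ¬ ∃ W : Finset (Fin n), W.card = k ∧ ∀ j, (W ∩ S j).Nonempty := by
  classical
  have hsurj : ∀ z : C, z = y ∨ ∃ j, z = x j := by
    intro z
    have hcard : (insert y (Finset.univ.image x)).card = t + 1 := by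
      rw [Finset.card_insert_of_notMem, Finset.card_image_of_injective _ hxinj,
        Finset.card_univ, Fintype.card_fin]
      simp only [Finset.mem_image]
      rintro ⟨j, -, hj⟩
      exact hxy j hj
    have huniv : insert y (Finset.univ.image x) = Finset.univ :=
      Finset.eq_univ_of_card _ (by rw [hcard, hC])
    have hz : z ∈ insert y (Finset.univ.image x) := huniv ▸ Finset.mem_univ z
    rcases Finset.mem_insert.1 hz with h | h
    · exact Or.inl h
    · obtain ⟨j, -, hj⟩ := Finset.mem_image.1 h
      exact Or.inr ⟨j, hj.symm⟩
  have hmy : ∀ (R : Finset (Fin n)) (j : Fin t),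
      margin (∑ i ∈ R, G i) y (x j) = 2 * ((R ∩ S j).card : ℤ) := by
    intro R j
    rw [margin_sum', Finset.sum_congr rfl (fun i _ => hGyx i j),
      Finset.sum_ite, Finset.sum_const, Finset.sum_const]
    simp [Finset.filter_mem_eq_inter, mul_comm]
  have hyW : ∀ (R : Finset (Fin n)), (∀ j, (R ∩ S j).Nonempty) →
      CondorcetWinner (∑ i ∈ R, G i) y := by
    intro R hR z hz
    rcases hsurj z with rfl | ⟨j, rfl⟩
    · exact absurd rfl hz
    · rw [hmy]
      have h1 := Finset.card_pos.2 (hR j)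
      have : (0:ℤ) < ((R ∩ S j).card : ℤ) := by exact_mod_cast h1
      omega
  have hnoX : ∀ (R : Finset (Fin n)) (j : Fin t),
      ¬ CondorcetWinner (∑ i ∈ R, G i) (x j) := by
    intro R j h
    have h1 := h y (fun hy => hxy j hy.symm)
    rw [margin_neg', hmy] at h1
    have h2 : (0:ℤ) ≤ ((R ∩ S j).card : ℤ) := Int.ofNat_nonneg _
    omega
  have huniq : ∀ (R : Finset (Fin n)) c, CondorcetWinner (∑ i ∈ R, G i) c → c = y := by
    intro R c hc
    rcases hsurj c with rfl | ⟨j, rfl⟩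
    · rfl
    · exact absurd hc (hnoX R j)
  have hrule1 : ∀ (R : Finset (Fin n)), (∀ j, (R ∩ S j).Nonempty) →
      condorcetRule (∑ i ∈ R, G i) = {y} := by
    intro R hR
    have hw := hyW R hR
    ext z
    simp only [condorcetRule, Set.mem_setOf_eq, Set.mem_singleton_iff]
    constructor
    · rintro (h | h)
      · exact huniq R z h
      · exact absurd ⟨y, hw⟩ h
    · rintro rfl; exact Or.inl hw
  have hrule2 : ∀ (R : Finset (Fin n)) (j : Fin t), R ∩ S j = ∅ →
      condorcetRule (∑ i ∈ R, G i) = Set.univ := by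
    intro R j hj
    have hno : ¬ ∃ c, CondorcetWinner (∑ i ∈ R, G i) c := by
      rintro ⟨c, hc⟩
      have hcy := huniq R c hc; subst hcy
      have h1 := hc (x j) (hxy j)
      rw [hmy, hj] at h1
      simp at h1
    ext z; simp [condorcetRule, hno]
  have hfull : condorcetRule (∑ i, G i) = {y} := hrule1 Finset.univ (fun j => by
    obtain ⟨a, ha⟩ := hS j
    exact ⟨a, Finset.mem_inter.2 ⟨Finset.mem_univ a, ha⟩⟩)
  constructor
  · rintro ⟨I, -, hI⟩ ⟨W, hWcard, hWhit⟩
    apply hI W (le_of_eq hWcard)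
    rw [hfull]
    apply hrule1
    intro j
    obtain ⟨a, ha⟩ := hWhit j
    rw [Finset.mem_inter] at ha
    refine ⟨a, Finset.mem_inter.2 ⟨?_, ha.2⟩⟩
    simp only [Finset.mem_sdiff, Finset.mem_univ, true_and, not_and, not_not]
    intro _; exact ha.1
  · intro hno
    refine ⟨Finset.univ, by simp, ?_⟩
    intro I' hI'
    have hR : Finset.univ \ (Finset.univ \ I') = I' := by simp
    rw [hR, hfull]
    have hj : ∃ j, I' ∩ S j = ∅ := by
      by_contra hcon
      push_neg at hcon
      obtain ⟨W, hIW, hWcard⟩ := Finset.exists_superset_card_eq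
        (s := I') hI' (by simp [hkn])
      refine hno ⟨W, hWcard, fun j => ?_⟩
      obtain ⟨a, ha⟩ := hcon j
      rw [Finset.mem_inter] at ha
      exact ⟨a, Finset.mem_inter.2 ⟨hIW ha.1, ha.2⟩⟩
    obtain ⟨j, hj⟩ := hj
    rw [hrule2 I' j hj]
    intro h
    have hx : x j ∈ ({y} : Set C) := h ▸ Set.mem_univ (x j)
    exact hxy j hx
end

section
/- Let G = (V, E) be a graph with V = {v_1,…,v_n} and E = {e_1,…,e_m}, m ≥ 1, and let k be an integer with 2 ≤ k ≤ n. Fix the candidate set C = {x_1,…,x_m, y, d}, a normalized score vector α of length m+2, and for each ordered pair (u,v) of distinct candidates fix a profile P_u^v as in the context. Define voter groups: for each i ∈ [n], G_i consists of 10m copies of P_d^x for every candidate x ∈ C∖{d}, together with 2 copies of P_{x_j}^d for every j ∈ [m] such that the edge e_j is incident on the vertex v_i; and H consists of one copy of P_d^{x_j} for every j ∈ [m]. Then the Optimal Attack instance (C, {G_1,…,G_n, H}, k_a = k, k_d = k − 2) for the scoring rule of α is a Yes instance if and only if G contains a clique of size k. -/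
open Finset

lemma score_add {C : Type*} {μ : ℕ} (α : Fin μ → ℝ) (P Q : Multiset (Vote C μ)) (c : C) :
    score α (P + Q) c = score α P c + score α Q c := by
  simp [score]

lemma score_nsmul {C : Type*} {μ : ℕ} (α : Fin μ → ℝ) (nn : ℕ) (P : Multiset (Vote C μ)) (c : C) :
    score α (nn • P) c = nn * score α P c := by
  simp [score, Multiset.map_nsmul, Multiset.sum_nsmul, nsmul_eq_mul]

lemma score_sum {C : Type*} {μ : ℕ} {ι : Type*} (α : Fin μ → ℝ) (s : Finset ι)
    (P : ι → Multiset (Vote C μ)) (c : C) :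
    score α (∑ i ∈ s, P i) c = ∑ i ∈ s, score α (P i) c := by
  classical
  induction s using Finset.cons_induction with
  | empty => simp [score]
  | cons a s ha ih => rw [Finset.sum_cons, Finset.sum_cons, score_add, ih]

lemma sym2_filter_card {n : ℕ} (z : Sym2 (Fin n)) (h : ¬ z.IsDiag) :
    (Finset.univ.filter (fun i => i ∈ z)).card = 2 := by
  induction z using Sym2.ind with
  | _ a b =>
    have hab : a ≠ b := by simpa [Sym2.isDiag_iff_proj_eq] using h
    have : (Finset.univ.filter (fun i => i ∈ s(a, b))) = {a, b} := by
      ext i; simp [Sym2.mem_iff]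
    rw [this, Finset.card_insert_of_notMem (by simp [hab]), Finset.card_singleton]

lemma sym2_eq_of_mem {β : Type*} (z : Sym2 β) (u v : β) (huv : u ≠ v)
    (hu : u ∈ z) (hv : v ∈ z) : z = s(u, v) := by
  induction z using Sym2.ind with
  | _ a b =>
    rw [Sym2.mem_iff] at hu hv
    rcases hu with rfl | rfl <;> rcases hv with rfl | rfl <;> simp_all [Sym2.eq_swap]

/-- the Clique reduction instance for Optimal Attack under a scoring
rule. -/
theorem stmt12 (n m : ℕ) (hm : 1 ≤ m) (e : Fin m → Sym2 (Fin n))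
    (hediag : ∀ j, ¬ (e j).IsDiag) (heinj : Function.Injective e)
    (k : ℕ) (hk2 : 2 ≤ k) (hkn : k ≤ n)
    {C : Type} [Fintype C] [DecidableEq C] (hC : Fintype.card C = m + 2)
    (x : Fin m → C) (hxinj : Function.Injective x) (y d : C) (hyd : y ≠ d)
    (hxy : ∀ j, x j ≠ y) (hxd : ∀ j, x j ≠ d)
    (α : Fin (m + 2) → ℝ) (hmono : IsMonotoneScore α) (hnorm : IsNormalized α)
    (Pf : C → C → Multiset (Vote C (m + 2)))
    (hPf : ∀ u v : C, u ≠ v → PfGood α (Pf u v) u v) :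
    AttackYes (scoringRule α)
      (Fin.snoc
        (fun i : Fin n =>
          (∑ z ∈ Finset.univ.erase d, (10 * m) • Pf d z) +
            ∑ j ∈ Finset.univ.filter (fun j => i ∈ e j), 2 • Pf (x j) d)
        (∑ j, Pf d (x j)))
      k (k - 2) ↔
    ∃ T : Finset (Fin n), T.card = k ∧
      ∀ u ∈ T, ∀ v ∈ T, u ≠ v → ∃ j, e j = s(u, v) := by
  classical
  set Gv : Fin n → Multiset (Vote C (m + 2)) :=
    fun i : Fin n =>
      (∑ z ∈ Finset.univ.erase d, (10 * m) • Pf d z) +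
        ∑ j ∈ Finset.univ.filter (fun j => i ∈ e j), 2 • Pf (x j) d with hGv
  set Hp : Multiset (Vote C (m + 2)) := ∑ j, Pf d (x j) with hHp
  set G : Fin (n + 1) → Multiset (Vote C (m + 2)) := Fin.snoc Gv Hp with hGdef
  -- classification of candidates
  have hclass : ∀ c : C, c = y ∨ c = d ∨ ∃ j, c = x j := by
    intro c
    by_contra hcon
    push_neg at hcon
    obtain ⟨h1, h2, h3⟩ := hcon
    have hsub : insert c (insert y (insert d (Finset.univ.image x))) ⊆ Finset.univ :=
      Finset.subset_univ _
    have hcard : (insert c (insert y (insert d (Finset.univ.image x)))).card ≤ m + 2 := by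
      rw [← hC, ← Finset.card_univ]; exact Finset.card_le_card hsub
    have himg : (Finset.univ.image x).card = m := by
      rw [Finset.card_image_of_injective _ hxinj, Finset.card_univ, Fintype.card_fin]
    have hd : d ∉ Finset.univ.image x := by
      simp only [Finset.mem_image]; rintro ⟨j, -, hj⟩; exact hxd j hj
    have hy : y ∉ insert d (Finset.univ.image x) := by
      simp only [Finset.mem_insert, Finset.mem_image]
      rintro (h | ⟨j, -, hj⟩); exact hyd h; exact hxy j hj
    have hc : c ∉ insert y (insert d (Finset.univ.image x)) := by
      simp only [Finset.mem_insert, Finset.mem_image]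
      rintro (h | h | ⟨j, -, hj⟩)
      · exact h1 h
      · exact h2 h
      · exact h3 j hj.symm
    rw [Finset.card_insert_of_notMem hc, Finset.card_insert_of_notMem hy,
      Finset.card_insert_of_notMem hd, himg] at hcard
    omega
  -- score values of the basic profiles
  have hsc : ∀ u v : C, u ≠ v → ∀ c : C, score α (Pf u v) c =
      (score α (Pf u v) v - 1) + (if c = v then 1 else if c = u then -1 else 0) := by
    intro u v huv c
    obtain ⟨-, h1, h2⟩ := hPf u v huv
    by_cases hcv : c = v
    · subst hcv; rw [if_pos (rfl : c = c)]; ring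
    · by_cases hcu : c = u
      · subst hcu; rw [if_neg hcv, if_pos (rfl : c = c)]; linarith
      · rw [h2 c hcu hcv, if_neg hcv, if_neg hcu]; ring
  -- expansion of vertex-group scores
  have hexp : ∀ (i : Fin n) (c : C), score α (Gv i) c =
      (∑ z ∈ Finset.univ.erase d, (10 * m : ℝ) * score α (Pf d z) c) +
        ∑ j' ∈ Finset.univ.filter (fun j' => i ∈ e j'), 2 * score α (Pf (x j') d) c := by
    intro i c
    rw [hGv]
    rw [score_add, score_sum, score_sum]
    simp [score_nsmul]
  -- per-group difference: y vs x j, vertex groups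
  have hyx : ∀ (i : Fin n) (j : Fin m),
      score α (Gv i) y - score α (Gv i) (x j) = if i ∈ e j then 2 else 0 := by
    intro i j
    rw [hexp, hexp, add_sub_add_comm, ← Finset.sum_sub_distrib, ← Finset.sum_sub_distrib]
    have h1 : ∑ z ∈ Finset.univ.erase d,
        ((10 * m : ℝ) * score α (Pf d z) y - (10 * m : ℝ) * score α (Pf d z) (x j)) = 0 := by
      have : ∀ z ∈ Finset.univ.erase d,
          (10 * m : ℝ) * score α (Pf d z) y - (10 * m : ℝ) * score α (Pf d z) (x j)
            = (if y = z then (10 * m : ℝ) else 0) - (if x j = z then (10 * m : ℝ) else 0) := by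
        intro z hz
        have hdz : d ≠ z := fun h => (Finset.mem_erase.mp hz).1 h.symm
        rw [hsc d z hdz y, hsc d z hdz (x j)]
        simp only [if_neg hyd, if_neg (hxd j)]
        by_cases h1 : y = z <;> by_cases h2 : x j = z <;> simp [h1, h2] <;> ring
      rw [Finset.sum_congr rfl this, Finset.sum_sub_distrib,
        Finset.sum_ite_eq _ y _, Finset.sum_ite_eq _ (x j) _]
      have hy' : y ∈ Finset.univ.erase d := Finset.mem_erase.mpr ⟨hyd, Finset.mem_univ _⟩
      have hx' : x j ∈ Finset.univ.erase d := Finset.mem_erase.mpr ⟨hxd j, Finset.mem_univ _⟩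
      rw [if_pos hy', if_pos hx', sub_self]
    have h2 : ∑ j' ∈ Finset.univ.filter (fun j' => i ∈ e j'),
        (2 * score α (Pf (x j') d) y - 2 * score α (Pf (x j') d) (x j))
          = if i ∈ e j then 2 else 0 := by
      have : ∀ j' ∈ Finset.univ.filter (fun j' => i ∈ e j'),
          2 * score α (Pf (x j') d) y - 2 * score α (Pf (x j') d) (x j)
            = if j = j' then (2 : ℝ) else 0 := by
        intro j' _
        rw [hsc (x j') d (hxd j') y, hsc (x j') d (hxd j') (x j)]
        have hy1 : ¬ y = d := hyd
        have hy2 : ¬ y = x j' := fun h => hxy j' h.symm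
        have hx1 : ¬ x j = d := hxd j
        have hxx : (x j = x j') ↔ (j = j') := ⟨fun h => hxinj h, fun h => by rw [h]⟩
        simp only [if_neg hy1, if_neg hy2, if_neg hx1]
        by_cases h : j = j'
        · rw [if_pos (hxx.mpr h), if_pos h]; ring
        · have hxx' : ¬ x j = x j' := fun hh => h (hxx.mp hh)
          rw [if_neg hxx', if_neg h]; ring
      rw [Finset.sum_congr rfl this, Finset.sum_ite_eq _ j _]
      simp
    rw [h1, h2, zero_add]
  -- per-group difference: y vs x j, group H
  have hHyx : ∀ j : Fin m, score α Hp y - score α Hp (x j) = -1 := by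
    intro j
    rw [hHp, score_sum, score_sum, ← Finset.sum_sub_distrib]
    have : ∀ j' ∈ (Finset.univ : Finset (Fin m)),
        score α (Pf d (x j')) y - score α (Pf d (x j')) (x j)
          = -(if j = j' then (1:ℝ) else 0) := by
      intro j' _
      have hdx : d ≠ x j' := fun h => hxd j' h.symm
      rw [hsc d (x j') hdx y, hsc d (x j') hdx (x j)]
      have hy2 : ¬ y = x j' := fun h => hxy j' h.symm
      have hy1 : ¬ y = d := hyd
      have hxx : (x j = x j') ↔ (j = j') := ⟨fun h => hxinj h, fun h => by rw [h]⟩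
      simp only [if_neg hy2, if_neg hy1]
      by_cases h : j = j'
      · rw [if_pos (hxx.mpr h), if_pos h]; ring
      · have hxx' : ¬ x j = x j' := fun hh => h (hxx.mp hh)
        rw [if_neg hxx', if_neg (hxd j), if_neg h]; ring
    rw [Finset.sum_congr rfl this, Finset.sum_neg_distrib, Finset.sum_ite_eq _ j _]
    simp
  -- per-group difference: y vs d, vertex groups
  have hyd' : ∀ i : Fin n, 0 < score α (Gv i) y - score α (Gv i) d := by
    intro i
    rw [hexp, hexp, add_sub_add_comm, ← Finset.sum_sub_distrib, ← Finset.sum_sub_distrib]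
    have h1 : ∀ z ∈ Finset.univ.erase d,
        (10 * m : ℝ) * score α (Pf d z) y - (10 * m : ℝ) * score α (Pf d z) d
          ≥ 10 * m := by
      intro z hz
      have hdz : d ≠ z := fun h => (Finset.mem_erase.mp hz).1 h.symm
      rw [hsc d z hdz y, hsc d z hdz d]
      have hdz' : ¬ d = z := hdz
      have hm' : (0:ℝ) ≤ (m:ℝ) := Nat.cast_nonneg m
      rw [if_neg hyd, if_neg hdz', if_pos (rfl : d = d)]
      by_cases h1 : y = z
      · rw [if_pos h1]; nlinarith
      · rw [if_neg h1]; nlinarith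
    have h2 : ∀ j' ∈ Finset.univ.filter (fun j' => i ∈ e j'),
        2 * score α (Pf (x j') d) y - 2 * score α (Pf (x j') d) d = -2 := by
      intro j' _
      rw [hsc (x j') d (hxd j') y, hsc (x j') d (hxd j') d]
      have hy2 : ¬ y = x j' := fun h => hxy j' h.symm
      rw [if_neg hyd, if_neg hy2, if_pos (rfl : d = d)]
      ring
    have hb1 : (∑ z ∈ Finset.univ.erase d,
        ((10 * m : ℝ) * score α (Pf d z) y - (10 * m : ℝ) * score α (Pf d z) d))
          ≥ (m + 1) * (10 * m) := by
      calc (∑ z ∈ Finset.univ.erase d,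
          ((10 * m : ℝ) * score α (Pf d z) y - (10 * m : ℝ) * score α (Pf d z) d))
          ≥ ∑ _z ∈ Finset.univ.erase d, (10 * m : ℝ) := Finset.sum_le_sum h1
        _ = ((Finset.univ.erase d).card : ℝ) * (10 * m) := by rw [Finset.sum_const]; ring
        _ = (m + 1) * (10 * m) := by
            rw [Finset.card_erase_of_mem (Finset.mem_univ d), Finset.card_univ, hC]
            push_cast; ring
    have hb2 : (∑ j' ∈ Finset.univ.filter (fun j' => i ∈ e j'),
        (2 * score α (Pf (x j') d) y - 2 * score α (Pf (x j') d) d)) ≥ -(2 * m) := by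
      rw [Finset.sum_congr rfl h2, Finset.sum_const]
      have : (Finset.univ.filter (fun j' => i ∈ e j')).card ≤ m := by
        calc (Finset.univ.filter (fun j' => i ∈ e j')).card
            ≤ (Finset.univ : Finset (Fin m)).card := Finset.card_filter_le _ _
          _ = m := by simp
      have := (Nat.cast_le (α := ℝ)).mpr this
      simp only [nsmul_eq_mul]
      nlinarith
    have hm' : (1:ℝ) ≤ m := by exact_mod_cast hm
    nlinarith
  -- per-group difference: y vs d, group H
  have hHyd : score α Hp y - score α Hp d = m := by
    rw [hHp, score_sum, score_sum, ← Finset.sum_sub_distrib]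
    have : ∀ j' ∈ (Finset.univ : Finset (Fin m)),
        score α (Pf d (x j')) y - score α (Pf d (x j')) d = 1 := by
      intro j' _
      have hdx : d ≠ x j' := fun h => hxd j' h.symm
      rw [hsc d (x j') hdx y, hsc d (x j') hdx d]
      have hy2 : ¬ y = x j' := fun h => hxy j' h.symm
      have hd2 : ¬ d = x j' := hdx
      rw [if_neg hyd, if_neg hy2, if_neg hd2, if_pos (rfl : d = d)]
      ring
    rw [Finset.sum_congr rfl this, Finset.sum_const]
    simp
  have hm' : (1:ℝ) ≤ (m:ℝ) := by exact_mod_cast hm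
  -- groups via snoc
  have hGc : ∀ i : Fin n, G (Fin.castSucc i) = Gv i := by
    intro i; rw [hGdef]; exact Fin.snoc_castSucc _ _ _
  have hGl : G (Fin.last n) = Hp := by
    rw [hGdef]; exact Fin.snoc_last _ _
  have hsumdiff : ∀ (K : Finset (Fin (n + 1))) (c₁ c₂ : C),
      score α (∑ i ∈ K, G i) c₁ - score α (∑ i ∈ K, G i) c₂
        = ∑ i ∈ K, (score α (G i) c₁ - score α (G i) c₂) := by
    intro K c₁ c₂; rw [score_sum, score_sum, Finset.sum_sub_distrib]
  have htot : ∀ j : Fin m,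
      (∑ i : Fin (n + 1), (score α (G i) y - score α (G i) (x j))) = 3 := by
    intro j
    rw [Fin.sum_univ_castSucc]
    have h1 : ∀ i : Fin n,
        score α (G (Fin.castSucc i)) y - score α (G (Fin.castSucc i)) (x j)
          = if i ∈ e j then (2:ℝ) else 0 := fun i => by rw [hGc]; exact hyx i j
    rw [Finset.sum_congr rfl (fun i _ => h1 i), hGl, hHyx j]
    have h4 : (∑ i : Fin n, if i ∈ e j then (2:ℝ) else 0) = 4 := by
      rw [Finset.sum_ite, Finset.sum_const, Finset.sum_const,
        sym2_filter_card (e j) (hediag j)]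
      simp
      norm_num
    rw [h4]; norm_num
  have hub : ∀ (S' : Finset (Fin (n + 1))) (j : Fin m),
      (∑ i ∈ S', (score α (G i) y - score α (G i) (x j)))
        ≤ 2 * ((S'.erase (Fin.last n)).card : ℝ) := by
    intro S' j
    have step : ∀ i ∈ S',
        score α (G i) y - score α (G i) (x j) ≤ if i = Fin.last n then (0:ℝ) else 2 := by
      intro i _
      induction i using Fin.lastCases with
      | last =>
        rw [hGl, hHyx j, if_pos (rfl : Fin.last n = Fin.last n)]; norm_num
      | cast i =>
        rw [hGc, hyx i j, if_neg ((Fin.castSucc_lt_last i).ne)]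
        split_ifs <;> norm_num
    calc (∑ i ∈ S', (score α (G i) y - score α (G i) (x j)))
        ≤ ∑ i ∈ S', (if i = Fin.last n then (0:ℝ) else 2) := Finset.sum_le_sum step
      _ = 2 * ((S'.erase (Fin.last n)).card : ℝ) := by
          rw [Finset.sum_ite, Finset.sum_const, Finset.sum_const]
          rw [show (S'.filter (fun i => ¬ i = Fin.last n)) = S'.erase (Fin.last n) from
            Finset.filter_ne' S' (Fin.last n)]
          simp [mul_comm]
  have hwin : ∀ S' : Finset (Fin (n + 1)), S'.card ≤ n →
      (∀ j : Fin m, (∑ i ∈ S', (score α (G i) y - score α (G i) (x j))) < 3) →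
      scoringRule α (∑ i ∈ Finset.univ \ S', G i) = {y} := by
    intro S' hcard hlt
    have hsub : S' ⊆ Finset.univ := Finset.subset_univ _
    have hxj : ∀ j, score α (∑ i ∈ Finset.univ \ S', G i) (x j)
        < score α (∑ i ∈ Finset.univ \ S', G i) y := by
      intro j
      have h0 := hsumdiff (Finset.univ \ S') y (x j)
      have h1 := Finset.sum_sdiff_eq_sub (f := fun i => score α (G i) y - score α (G i) (x j)) hsub
      rw [htot j] at h1
      have := hlt j
      linarith
    have hdlt : score α (∑ i ∈ Finset.univ \ S', G i) d
        < score α (∑ i ∈ Finset.univ \ S', G i) y := by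
      have hpos : ∀ i ∈ Finset.univ \ S', 0 < score α (G i) y - score α (G i) d := by
        intro i _
        induction i using Fin.lastCases with
        | last => rw [hGl, hHyd]; linarith
        | cast i => rw [hGc]; exact hyd' i
      have hne : (Finset.univ \ S').Nonempty := by
        rw [← Finset.card_pos, Finset.card_sdiff_of_subset hsub, Finset.card_univ, Fintype.card_fin]
        omega
      have hp := Finset.sum_pos hpos hne
      have h0 := hsumdiff (Finset.univ \ S') y d
      linarith
    ext c
    simp only [scoringRule, Set.mem_setOf_eq, Set.mem_singleton_iff]
    constructor
    · intro hmem
      by_contra hcy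
      rcases hclass c with rfl | rfl | ⟨j, rfl⟩
      · exact hcy rfl
      · have := hmem y; linarith
      · have := hmem y; linarith [hxj j]
    · rintro rfl c'
      rcases hclass c' with rfl | rfl | ⟨j, rfl⟩
      · exact le_refl _
      · exact hdlt.le
      · exact (hxj j).le
  have hfull : scoringRule α (∑ i, G i) = {y} := by
    have h := hwin ∅ (by simp) (by intro j; simp)
    rwa [Finset.sdiff_empty] at h
  constructor
  · -- attack ⇒ clique
    rintro ⟨I, hIk, hI⟩
    have hdef : ∀ I' : Finset (Fin (n + 1)), I'.card ≤ k - 2 →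
        (I \ I').card ≤ n →
        (∀ j : Fin m, (∑ i ∈ I \ I', (score α (G i) y - score α (G i) (x j))) < 3) →
        False := by
      intro I' ha hb hc
      exact hI I' ha (by rw [hwin (I \ I') hb hc, hfull])
    have h1 : k - 1 ≤ I.card := by
      by_contra hcon
      push_neg at hcon
      refine hdef I (by omega) ?_ ?_
      · rw [Finset.sdiff_self]; simp
      · intro j; rw [Finset.sdiff_self, Finset.sum_empty]; norm_num
    have h2 : Fin.last n ∉ I := by
      intro hl
      obtain ⟨I', hI'sub, hI'card⟩ := Finset.exists_subset_card_eq (s := I.erase (Fin.last n))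
        (n := I.card - 2) (by rw [Finset.card_erase_of_mem hl]; omega)
      have hI'I : I' ⊆ I := hI'sub.trans (Finset.erase_subset _ _)
      have hcd : (I \ I').card = I.card - I'.card := Finset.card_sdiff_of_subset hI'I
      have hlmem : Fin.last n ∈ I \ I' := Finset.mem_sdiff.mpr
        ⟨hl, fun h => (Finset.mem_erase.mp (hI'sub h)).1 rfl⟩
      refine hdef I' (by omega) (by omega) ?_
      intro j
      have hb := hub (I \ I') j
      have hce : ((I \ I').erase (Fin.last n)).card ≤ 1 := by
        rw [Finset.card_erase_of_mem hlmem]; omega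
      have hce' : (((I \ I').erase (Fin.last n)).card : ℝ) ≤ 1 := by exact_mod_cast hce
      linarith
    have h3 : I.card = k := by
      by_contra hcon
      obtain ⟨I', hI'sub, hI'card⟩ := Finset.exists_subset_card_eq (s := I) (n := I.card - 1) (by omega)
      have hcd : (I \ I').card = I.card - I'.card := Finset.card_sdiff_of_subset hI'sub
      refine hdef I' (by omega) (by omega) ?_
      intro j
      have hb := hub (I \ I') j
      have hce : ((I \ I').erase (Fin.last n)).card ≤ 1 :=
        le_trans (Finset.card_erase_le) (by omega)
      have hce' : (((I \ I').erase (Fin.last n)).card : ℝ) ≤ 1 := by exact_mod_cast hce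
      linarith
    have h4 : ∀ u v : Fin n, Fin.castSucc u ∈ I → Fin.castSucc v ∈ I → u ≠ v →
        ∃ j, e j = s(u, v) := by
      intro u v hu hv huv
      by_contra hcon
      push_neg at hcon
      have hcc : Fin.castSucc u ≠ Fin.castSucc v := fun h => huv (Fin.castSucc_injective n h)
      have hpair : ({Fin.castSucc u, Fin.castSucc v} : Finset (Fin (n + 1))) ⊆ I := by
        intro a ha
        rcases Finset.mem_insert.mp ha with rfl | ha
        · exact hu
        · rw [Finset.mem_singleton.mp ha]; exact hv
      have hcpair : ({Fin.castSucc u, Fin.castSucc v} : Finset (Fin (n + 1))).card = 2 := by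
        rw [Finset.card_insert_of_notMem (by simp [hcc]), Finset.card_singleton]
      have hI'c : (I \ ({Fin.castSucc u, Fin.castSucc v} : Finset (Fin (n + 1)))).card = k - 2 := by
        rw [Finset.card_sdiff_of_subset hpair, hcpair, h3]
      have hSd : I \ (I \ ({Fin.castSucc u, Fin.castSucc v} : Finset (Fin (n + 1))))
          = {Fin.castSucc u, Fin.castSucc v} := by
        rw [Finset.sdiff_sdiff_self_left, Finset.inter_eq_right.mpr hpair]
      refine hdef (I \ {Fin.castSucc u, Fin.castSucc v}) (le_of_eq hI'c) ?_ ?_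
      · rw [hSd, hcpair]; omega
      · intro j
        rw [hSd, Finset.sum_pair hcc, hGc, hGc, hyx u j, hyx v j]
        by_cases hu' : u ∈ e j
        · by_cases hv' : v ∈ e j
          · exact absurd (sym2_eq_of_mem (e j) u v huv hu' hv') (hcon j)
          · rw [if_pos hu', if_neg hv']; norm_num
        · by_cases hv' : v ∈ e j
          · rw [if_neg hu', if_pos hv']; norm_num
          · rw [if_neg hu', if_neg hv']; norm_num
    refine ⟨Finset.univ.filter (fun i => Fin.castSucc i ∈ I), ?_, ?_⟩
    · have himg : (Finset.univ.filter (fun i => Fin.castSucc i ∈ I)).image Fin.castSucc = I := by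
        ext a
        simp only [Finset.mem_image, Finset.mem_filter, Finset.mem_univ, true_and]
        constructor
        · rintro ⟨i, hi, rfl⟩; exact hi
        · intro ha
          have hne : a ≠ Fin.last n := fun h => h2 (h ▸ ha)
          have hvne : (a : ℕ) ≠ n := fun h => hne (Fin.ext h)
          have hlt : (a : ℕ) < n := by have := a.isLt; omega
          refine ⟨⟨(a : ℕ), hlt⟩, ?_, ?_⟩
          · have : Fin.castSucc (⟨(a : ℕ), hlt⟩ : Fin n) = a := Fin.ext rfl
            rw [this]; exact ha
          · exact Fin.ext rfl
      have hcimg := congrArg Finset.card himg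
      rw [Finset.card_image_of_injective _ (Fin.castSucc_injective n)] at hcimg
      rw [hcimg, h3]
    · intro u hu v hv huv
      exact h4 u v (Finset.mem_filter.mp hu).2 (Finset.mem_filter.mp hv).2 huv
  · -- clique ⇒ attack
    rintro ⟨T, hTk, hTcl⟩
    refine ⟨T.image Fin.castSucc, ?_, ?_⟩
    · rw [Finset.card_image_of_injective _ (Fin.castSucc_injective n), hTk]
    · intro I' hI'
      have hTc : (T.image Fin.castSucc).card = k := by
        rw [Finset.card_image_of_injective _ (Fin.castSucc_injective n), hTk]
      have h2le : 2 ≤ (T.image Fin.castSucc \ I').card := by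
        have hle := Finset.le_card_sdiff I' (T.image Fin.castSucc)
        omega
      obtain ⟨a, ha, b, hb, hab⟩ := (Finset.one_lt_card (s := T.image Fin.castSucc \ I')).mp (by omega)
      have haT := (Finset.mem_sdiff.mp ha).1
      have hbT := (Finset.mem_sdiff.mp hb).1
      obtain ⟨u, huT, hua⟩ := Finset.mem_image.mp haT
      obtain ⟨v, hvT, hvb⟩ := Finset.mem_image.mp hbT
      have huv : u ≠ v := by
        intro h; apply hab; rw [← hua, ← hvb, h]
      obtain ⟨j, hj⟩ := hTcl u huT v hvT huv
      rw [hfull]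
      intro heq
      have hymem : y ∈ scoringRule α (∑ i ∈ Finset.univ \ (T.image Fin.castSucc \ I'), G i) := by
        rw [heq]; exact rfl
      have hle : score α (∑ i ∈ Finset.univ \ (T.image Fin.castSucc \ I'), G i) (x j)
          ≤ score α (∑ i ∈ Finset.univ \ (T.image Fin.castSucc \ I'), G i) y := hymem (x j)
      have hdiff := hsumdiff (Finset.univ \ (T.image Fin.castSucc \ I')) y (x j)
      have hsd := Finset.sum_sdiff_eq_sub
        (f := fun i => score α (G i) y - score α (G i) (x j))
        (Finset.subset_univ (T.image Fin.castSucc \ I'))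
      rw [htot j] at hsd
      have hnn : ∀ i ∈ T.image Fin.castSucc \ I',
          0 ≤ score α (G i) y - score α (G i) (x j) := by
        intro i hi
        obtain ⟨w, hw, rfl⟩ := Finset.mem_image.mp (Finset.mem_sdiff.mp hi).1
        rw [hGc, hyx w j]
        split_ifs <;> norm_num
      have hpairsub : ({a, b} : Finset (Fin (n + 1))) ⊆ T.image Fin.castSucc \ I' := by
        intro c hc
        rcases Finset.mem_insert.mp hc with rfl | hc
        · exact ha
        · rw [Finset.mem_singleton.mp hc]; exact hb
      have hu' : u ∈ e j := by rw [hj]; exact Sym2.mem_mk_left _ _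
      have hv' : v ∈ e j := by rw [hj]; exact Sym2.mem_mk_right _ _
      have hsum4 : (4:ℝ) ≤ ∑ i ∈ T.image Fin.castSucc \ I',
          (score α (G i) y - score α (G i) (x j)) := by
        have hpp : (∑ i ∈ ({a, b} : Finset (Fin (n + 1))),
            (score α (G i) y - score α (G i) (x j))) = 4 := by
          rw [Finset.sum_pair hab, ← hua, ← hvb, hGc, hGc, hyx u j, hyx v j,
            if_pos hu', if_pos hv']
          norm_num
        calc (4:ℝ) = _ := hpp.symm
          _ ≤ _ := Finset.sum_le_sum_of_subset_of_nonneg hpairsub (fun i hi _ => hnn i hi)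
      linarith
end
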